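/- Let α ∈ (0,1) be irrational and let f = 2χ_U − 1 be a mean-zero indicator function (U a finite union of disjoint intervals with m(U) = 1/2). If the series Σ_{n=1}^∞ f(T^n 0)·(1/n) diverges, where T = R_α, then α is a Liouville number. -/

import Mathlib

open MeasureTheory Filter Topology

noncomputable section

open Finset

-- bijection of residues lemma
lemma sum_mod_bij (q : ℕ) (hq : 0 < q) (σ τ : ℤ → ℤ)
    (hσ : ∀ a b : ℤ, a % q = b % q → σ a % q = σ b % q)
    (hτ : ∀ a b : ℤ, a % q = b % q → τ a % q = τ b % q)
    (h1 : ∀ i : ℤ, τ (σ i) % q = i % q)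
    (h2 : ∀ i : ℤ, σ (τ i) % q = i % q)
    (g : ℕ → ℝ) :
    ∑ n ∈ range q, g ((σ n % q).toNat) = ∑ j ∈ range q, g j := by
  have hq' : (0:ℤ) < q := by exact_mod_cast hq
  have key : ∀ m : ℤ, ((m % q).toNat : ℤ) = m % q := fun m =>
    Int.toNat_of_nonneg (Int.emod_nonneg m hq'.ne')
  have mem : ∀ m : ℤ, (m % q).toNat < q := by
    intro m
    have := Int.emod_lt_of_pos m hq'
    omega
  refine Finset.sum_nbij' (fun n => (σ n % q).toNat) (fun m => (τ m % q).toNat)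
    (fun a _ => mem_range.2 (mem _)) (fun a _ => mem_range.2 (mem _)) ?_ ?_ ?_
  · intro a ha
    have ha' : (a:ℤ) % q = a := Int.emod_eq_of_lt (by positivity) (by exact_mod_cast mem_range.1 ha)
    have hh : τ (((σ a % q).toNat : ℤ)) % q = τ (σ a) % q :=
      hτ _ _ (by rw [key]; exact Int.emod_emod_of_dvd _ dvd_rfl)
    show (τ (((σ (a:ℤ) % q).toNat : ℤ)) % q).toNat = a
    rw [hh, h1, ha']
    omega
  · intro a ha
    have ha' : (a:ℤ) % q = a := Int.emod_eq_of_lt (by positivity) (by exact_mod_cast mem_range.1 ha)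
    have hh : σ (((τ a % q).toNat : ℤ)) % q = σ (τ a) % q :=
      hσ _ _ (by rw [key]; exact Int.emod_emod_of_dvd _ dvd_rfl)
    show (σ (((τ (a:ℤ) % q).toNat : ℤ)) % q).toNat = a
    rw [hh, h2, ha']
    omega
  · intro a _; rfl

lemma fract_small (q : ℕ) (hq : 0 < q) {w : ℝ} (hw0 : 0 ≤ w) (hw1 : w < 1/q) (i : ℤ) :
    Int.fract (w + i/q) = w + ((i % q).toNat : ℝ)/q := by
  have hq' : (0:ℤ) < q := by exact_mod_cast hq
  have hqR : (0:ℝ) < q := by exact_mod_cast hq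
  set r : ℕ := (i % q).toNat with hr
  have hrz : (r:ℤ) = i % q := Int.toNat_of_nonneg (Int.emod_nonneg i hq'.ne')
  have hrlt : r < q := by have := Int.emod_lt_of_pos i hq'; omega
  have hi : (i:ℝ) = r + q * ((i/q : ℤ) : ℝ) := by
    have h := Int.emod_add_mul_ediv i q
    have h2 : i = (r:ℤ) + q * (i / q) := by omega
    exact_mod_cast congrArg (Int.cast : ℤ → ℝ) h2
  have hsplit : w + i/q = (w + r/q) + ((i/q : ℤ) : ℝ) := by
    rw [hi]; field_simp; ring
  rw [hsplit, Int.fract_add_intCast, Int.fract_eq_self.2 ?_]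
  constructor
  · positivity
  · have h1 : (r:ℝ) ≤ (q:ℝ) - 1 := by
      have : (r:ℝ) + 1 ≤ q := by exact_mod_cast hrlt
      linarith
    have h2 : (r:ℝ)/q ≤ ((q:ℝ)-1)/q := by gcongr
    calc w + (r:ℝ)/q < 1/q + ((q:ℝ)-1)/q := add_lt_add_of_lt_of_le hw1 h2
      _ = 1 := by field_simp; ring

lemma sum_range_cast_half (q : ℕ) (hq : 0 < q) :
    ∑ j ∈ range q, (j:ℝ) = q * (q-1)/2 := by
  induction q with
  | zero => simp at hq
  | succ n ih =>
    rcases Nat.eq_zero_or_pos n with h | h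
    · subst h; simp
    · rw [Finset.sum_range_succ, ih h]
      push_cast
      ring

set_option maxHeartbeats 1000000 in
lemma sum_fract_orbit (q : ℕ) (hq : 0 < q) (p u : ℤ)
    (hpu : (p * u) % q = 1 % q)
    (y θ : ℝ) (hθ : |θ| < 1/(q:ℝ)^2) :
    |(∑ n ∈ range q, Int.fract (y + n * ((p:ℝ)/q + θ))) - q/2| ≤ 3 := by
  have hq' : (0:ℤ) < q := by exact_mod_cast hq
  have hqR : (0:ℝ) < q := by exact_mod_cast hq
  set K : ℤ := ⌊(q:ℝ) * y⌋ with hK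
  set w : ℝ := Int.fract ((q:ℝ) * y) / q with hw
  have hw0 : 0 ≤ w := div_nonneg (Int.fract_nonneg _) hqR.le
  have hw1 : w < 1/q := by
    rw [hw, div_lt_div_iff₀ hqR hqR, one_mul]
    nlinarith [Int.fract_lt_one ((q:ℝ) * y)]
  have hy : y = w + (K:ℝ)/q := by
    rw [hw, hK, ← add_div, Int.fract_add_floor, mul_comm (q:ℝ) y, mul_div_assoc,
      div_self hqR.ne', mul_one]
  -- the modular maps
  set σ : ℤ → ℤ := fun i => K + i * p with hσdef
  set τ : ℤ → ℤ := fun j => (j - K) * u with hτdef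
  have hσ : ∀ a b : ℤ, a % q = b % q → σ a % q = σ b % q := fun a b h =>
    (Int.ModEq.refl K).add (Int.ModEq.mul_right p h)
  have hτ : ∀ a b : ℤ, a % q = b % q → τ a % q = τ b % q := fun a b h =>
    Int.ModEq.mul_right u (Int.ModEq.sub h (Int.ModEq.refl K))
  have h1 : ∀ i : ℤ, τ (σ i) % q = i % q := by
    intro i
    have e : τ (σ i) = i * (p * u) := by simp only [hσdef, hτdef]; ring
    rw [e]
    calc i * (p * u) % q = i * 1 % q := (Int.ModEq.refl i).mul hpu
      _ = i % q := by rw [mul_one]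
  have h2 : ∀ i : ℤ, σ (τ i) % q = i % q := by
    intro i
    have e : σ (τ i) = K + (i - K) * (p * u) := by simp only [hσdef, hτdef]; ring
    rw [e]
    calc (K + (i - K) * (p * u)) % q = (K + (i - K) * 1) % q :=
          (Int.ModEq.refl K).add ((Int.ModEq.refl (i - K)).mul hpu)
      _ = i % q := by ring_nf
  -- fract of the rational orbit
  have hfr : ∀ n : ℕ, Int.fract (y + n * ((p:ℝ)/q)) = w + (((σ n % q).toNat : ℕ) : ℝ)/q := by
    intro n
    have e : y + n * ((p:ℝ)/q) = w + ((σ (n:ℤ) : ℤ) : ℝ)/q := by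
      rw [hy]; simp only [hσdef]; push_cast; field_simp; ring
    rw [e, fract_small q hq hw0 hw1]
  -- the error terms
  set d : ℕ → ℝ := fun n => Int.fract (y + n * ((p:ℝ)/q + θ)) - Int.fract (y + n * ((p:ℝ)/q)) - n * θ
    with hd
  have hsplit : (∑ n ∈ range q, Int.fract (y + n * ((p:ℝ)/q + θ)))
      = (∑ n ∈ range q, Int.fract (y + n * ((p:ℝ)/q))) + θ * (∑ n ∈ range q, (n:ℝ))
        + ∑ n ∈ range q, d n := by
    rw [Finset.mul_sum, ← Finset.sum_add_distrib, ← Finset.sum_add_distrib]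
    refine Finset.sum_congr rfl fun n _ => by simp only [hd]; ring
  -- main term
  have hmain : (∑ n ∈ range q, Int.fract (y + n * ((p:ℝ)/q))) = q * w + (q - 1)/2 := by
    have := sum_mod_bij q hq σ τ hσ hτ h1 h2 (fun j => w + (j:ℝ)/q)
    calc (∑ n ∈ range q, Int.fract (y + n * ((p:ℝ)/q)))
        = ∑ n ∈ range q, (w + (((σ n % q).toNat : ℕ) : ℝ)/q) := Finset.sum_congr rfl fun n _ => hfr n
      _ = ∑ j ∈ range q, (w + (j:ℝ)/q) := this
      _ = q * w + (q - 1)/2 := by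
          rw [Finset.sum_add_distrib, Finset.sum_const, ← Finset.sum_div, sum_range_cast_half q hq,
            Finset.card_range, nsmul_eq_mul]
          field_simp
  -- error bound: |θ| sum
  have hθsum : |θ * (∑ n ∈ range q, (n:ℝ))| ≤ 1/2 := by
    rw [sum_range_cast_half q hq, abs_mul]
    have hq1R : (1:ℝ) ≤ q := by exact_mod_cast hq
    have h1' : |(q:ℝ) * (q-1)/2| ≤ (q:ℝ)^2/2 := by
      rw [abs_of_nonneg (by nlinarith)]
      nlinarith
    calc |θ| * |(q:ℝ) * (q-1)/2| ≤ (1/(q:ℝ)^2) * ((q:ℝ)^2/2) := by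
          apply mul_le_mul hθ.le h1' (abs_nonneg _) (by positivity)
      _ = 1/2 := by field_simp
  -- d n bounds
  have hnθ : ∀ n ∈ range q, |(n:ℝ) * θ| < 1/q := by
    intro n hn
    have hn' : (n:ℝ) ≤ (q:ℝ) - 1 := by
      have : (n:ℝ) + 1 ≤ q := by exact_mod_cast mem_range.1 hn
      linarith
    have hn0 : (0:ℝ) ≤ n := Nat.cast_nonneg n
    rw [abs_mul, abs_of_nonneg hn0]
    rcases eq_or_lt_of_le hn0 with h | h
    · rw [← h]; simp; positivity
    · calc (n:ℝ) * |θ| < (n:ℝ) * (1/(q:ℝ)^2) := by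
            exact mul_lt_mul_of_pos_left hθ h
        _ ≤ ((q:ℝ) - 1) * (1/(q:ℝ)^2) := by
            apply mul_le_mul_of_nonneg_right hn' (by positivity)
        _ < 1/q := by
            have h9 : ((q:ℝ)-1) * (1/(q:ℝ)^2) = ((q:ℝ)-1)/(q:ℝ)^2 := by ring
            rw [h9, div_lt_div_iff₀ (by positivity) hqR]
            nlinarith
  set eB : ℕ → ℝ := fun j => (if j = 0 then (1:ℝ) else 0) + (if j = q - 1 then (1:ℝ) else 0)
    with heB
  have hdbound : ∀ n ∈ range q, |d n| ≤ eB ((σ n % q).toNat) := by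
    intro n hn
    set ρ : ℕ := (σ (n:ℤ) % q).toNat with hρ
    have hρlt : ρ < q := by
      have := Int.emod_lt_of_pos (σ (n:ℤ)) hq'
      have := Int.emod_nonneg (σ (n:ℤ)) hq'.ne'
      omega
    by_cases hcase : ρ = 0 ∨ ρ = q - 1
    · -- |d n| ≤ 1 and eB ρ ≥ 1
      have heB1 : (1:ℝ) ≤ eB ρ := by
        rcases hcase with h | h <;> simp [heB, h] <;> split <;> norm_num
      have habs : |d n| ≤ 1 := by
        set D : ℤ := ⌊y + n * ((p:ℝ)/q)⌋ - ⌊y + n * ((p:ℝ)/q + θ)⌋ with hD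
        have hdD : d n = (D:ℝ) := by
          simp only [hd, hD, Int.fract]
          push_cast
          ring
        have hb : |(D:ℝ)| < 2 := by
          rw [← hdD]
          have f1 := Int.fract_nonneg (y + n * ((p:ℝ)/q + θ))
          have f2 := Int.fract_lt_one (y + n * ((p:ℝ)/q + θ))
          have f3 := Int.fract_nonneg (y + n * ((p:ℝ)/q))
          have f4 := Int.fract_lt_one (y + n * ((p:ℝ)/q))
          have f5 := abs_lt.1 (hnθ n hn)
          have f6 : (1:ℝ)/q ≤ 1 := by
            rw [div_le_one hqR]
            exact_mod_cast hq
          simp only [hd]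
          rw [abs_lt]
          constructor
          · linarith [f5.1]
          · linarith [f5.2]
        have hD1 : |D| ≤ 1 := by
          have h2' : ((|D| : ℤ) : ℝ) < 2 := by rw [Int.cast_abs]; exact hb
          have : |D| < 2 := by exact_mod_cast h2'
          omega
        rw [hdD, ← Int.cast_abs]
        exact_mod_cast hD1
      calc |d n| ≤ 1 := habs
        _ ≤ eB ρ := heB1
    · push_neg at hcase
      have hρ1 : 1 ≤ ρ := by omega
      have hρ2 : ρ ≤ q - 2 := by omega
      have hfu : Int.fract (y + n * ((p:ℝ)/q)) = w + (ρ:ℝ)/q := hfr n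
      have hlo : 1/(q:ℝ) ≤ Int.fract (y + n * ((p:ℝ)/q)) := by
        rw [hfu]
        have : (1:ℝ) ≤ (ρ:ℝ) := by exact_mod_cast hρ1
        have : 1/(q:ℝ) ≤ (ρ:ℝ)/q := by gcongr
        linarith
      have hhi : Int.fract (y + n * ((p:ℝ)/q)) < ((q:ℝ) - 1)/q := by
        rw [hfu]
        have hρq : (ρ:ℝ) ≤ (q:ℝ) - 2 := by
          have h' : ρ + 2 ≤ q := by omega
          have h'' := (Nat.cast_le (α := ℝ)).2 h'
          push_cast at h''
          linarith
        have h3 : (ρ:ℝ)/q ≤ ((q:ℝ) - 2)/q := by gcongr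
        have h4 : 1/(q:ℝ) + ((q:ℝ)-2)/q = ((q:ℝ)-1)/q := by field_simp; ring
        linarith [hw1]
      have hdz : d n = 0 := by
        have hnθ' := abs_lt.1 (hnθ n hn)
        have hin : 0 ≤ Int.fract (y + n * ((p:ℝ)/q)) + n * θ ∧
            Int.fract (y + n * ((p:ℝ)/q)) + n * θ < 1 := by
          constructor
          · linarith [hnθ'.1]
          · have : ((q:ℝ) - 1)/q + 1/q = 1 := by field_simp; ring
            linarith [hnθ'.2]
        have key : Int.fract (y + n * ((p:ℝ)/q + θ))
            = Int.fract (y + n * ((p:ℝ)/q)) + n * θ := by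
          have e : y + n * ((p:ℝ)/q + θ)
              = (Int.fract (y + n * ((p:ℝ)/q)) + n * θ) + ((⌊y + n * ((p:ℝ)/q)⌋ : ℤ) : ℝ) := by
            have hfl := Int.fract_add_floor (y + n * ((p:ℝ)/q))
            have expand : y + n * ((p:ℝ)/q + θ) = (y + n * ((p:ℝ)/q)) + n * θ := by ring
            rw [expand]
            linarith [hfl]
          rw [e, Int.fract_add_intCast, Int.fract_eq_self.2 hin]
        simp only [hd, key]
        ring
      rw [hdz, abs_zero, heB]
      positivity
  have hdsum : |∑ n ∈ range q, d n| ≤ 2 := by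
    calc |∑ n ∈ range q, d n| ≤ ∑ n ∈ range q, |d n| := Finset.abs_sum_le_sum_abs _ _
      _ ≤ ∑ n ∈ range q, eB ((σ n % q).toNat) := Finset.sum_le_sum hdbound
      _ = ∑ j ∈ range q, eB j := sum_mod_bij q hq σ τ hσ hτ h1 h2 eB
      _ ≤ 2 := by
          rw [heB, Finset.sum_add_distrib,
            Finset.sum_ite_eq' (range q) 0 (fun _ => (1:ℝ)),
            Finset.sum_ite_eq' (range q) (q-1) (fun _ => (1:ℝ)),
            if_pos (mem_range.2 hq), if_pos (mem_range.2 (by omega : q - 1 < q))]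
          norm_num
  have hqw : |q * w - 1/2| ≤ 1/2 := by
    have e : (q:ℝ) * w = Int.fract ((q:ℝ) * y) := by rw [hw]; field_simp
    rw [e, abs_le]
    constructor
    · linarith [Int.fract_nonneg ((q:ℝ) * y)]
    · linarith [Int.fract_lt_one ((q:ℝ) * y)]
  rw [hsplit, hmain]
  have : q * w + ((q:ℝ) - 1)/2 + θ * (∑ n ∈ range q, (n:ℝ)) + (∑ n ∈ range q, d n) - q/2
      = (q * w - 1/2) + θ * (∑ n ∈ range q, (n:ℝ)) + (∑ n ∈ range q, d n) := by ring
  rw [this]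
  calc |(q * w - 1/2) + θ * (∑ n ∈ range q, (n:ℝ)) + (∑ n ∈ range q, d n)|
      ≤ |(q * w - 1/2) + θ * (∑ n ∈ range q, (n:ℝ))| + |∑ n ∈ range q, d n| := abs_add_le _ _
    _ ≤ (|q * w - 1/2| + |θ * (∑ n ∈ range q, (n:ℝ))|) + |∑ n ∈ range q, d n| := by
        gcongr; exact abs_add_le _ _
    _ ≤ (1/2 + 1/2) + 2 := by gcongr
    _ = 3 := by norm_num

lemma ceil_cast_eq (v : ℝ) : ((⌈v⌉ : ℤ) : ℝ) = v + Int.fract (-v) := by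
  rw [Int.fract]
  push_cast [Int.floor_neg]
  ring

lemma arc_indicator_eq (a b t : ℝ) (hab : a ≤ b) (hb1 : b ≤ a + 1) :
    Set.indicator ((fun r : ℝ => (r : UnitAddCircle)) '' Set.Ico a b) (fun _ => (1:ℝ))
      ((t : ℝ) : UnitAddCircle) = ((⌈b - t⌉ - ⌈a - t⌉ : ℤ) : ℝ) := by
  have hmem : (((t : ℝ) : UnitAddCircle) ∈ (fun r : ℝ => (r : UnitAddCircle)) '' Set.Ico a b)
      ↔ ∃ k : ℤ, a - t ≤ k ∧ (k:ℝ) < b - t := by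
    constructor
    · rintro ⟨s, hs, hst⟩
      have : ∃ k : ℤ, s - t = k := by
        have h2 := QuotientAddGroup.eq_iff_sub_mem.1 hst
        rw [AddSubgroup.mem_zmultiples_iff] at h2
        obtain ⟨k, hk⟩ := h2
        exact ⟨k, by simpa [zsmul_eq_mul] using hk.symm⟩
      obtain ⟨k, hk⟩ := this
      refine ⟨k, ?_, ?_⟩
      · rw [← hk]; linarith [hs.1]
      · rw [← hk]; linarith [hs.2]
    · rintro ⟨k, h1, h2⟩
      refine ⟨t + k, ⟨by linarith, by linarith⟩, ?_⟩
      show ((t + (k:ℝ) : ℝ) : UnitAddCircle) = ((t:ℝ) : UnitAddCircle)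
      rw [QuotientAddGroup.eq_iff_sub_mem, AddSubgroup.mem_zmultiples_iff]
      exact ⟨k, by simp [zsmul_eq_mul]⟩
  have hmono : ⌈a - t⌉ ≤ ⌈b - t⌉ := Int.ceil_le_ceil (by linarith)
  have hup : ⌈b - t⌉ ≤ ⌈a - t⌉ + 1 := by
    have h1 : ⌈b - t⌉ ≤ ⌈(a - t) + 1⌉ := Int.ceil_le_ceil (by linarith)
    have h2 : ⌈(a - t) + (1:ℝ)⌉ = ⌈a - t⌉ + 1 := by
      rw [show ((1:ℝ)) = ((1:ℤ):ℝ) by norm_num, Int.ceil_add_intCast]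
    omega
  by_cases h : ⌈a - t⌉ < ⌈b - t⌉
  · have hm : (((t : ℝ) : UnitAddCircle) ∈ (fun r : ℝ => (r : UnitAddCircle)) '' Set.Ico a b) := by
      rw [hmem]
      refine ⟨⌈a - t⌉, Int.le_ceil _, ?_⟩
      have h1 : (⌈a - t⌉ : ℝ) ≤ (⌈b - t⌉ : ℝ) - 1 := by
        have : ⌈a - t⌉ ≤ ⌈b - t⌉ - 1 := by omega
        exact_mod_cast this
      have h2 : ((⌈b - t⌉ : ℝ)) - 1 < b - t := by
        linarith [Int.ceil_lt_add_one (b - t)]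
      linarith
    rw [Set.indicator_of_mem hm]
    have : ⌈b - t⌉ - ⌈a - t⌉ = 1 := by omega
    rw [this]
    norm_num
  · have heq : ⌈b - t⌉ = ⌈a - t⌉ := by omega
    have hm : ¬(((t : ℝ) : UnitAddCircle) ∈ (fun r : ℝ => (r : UnitAddCircle)) '' Set.Ico a b) := by
      rw [hmem]
      rintro ⟨k, h1, h2⟩
      have hk1 : ⌈a - t⌉ ≤ k := Int.ceil_le.2 h1
      have hk2 : k < ⌈b - t⌉ := Int.lt_ceil.2 h2
      omega
    rw [Set.indicator_of_notMem hm]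
    rw [heq]
    norm_num

lemma arc_block (q : ℕ) (hq : 0 < q) (p u : ℤ)
    (hpu : (p * u) % q = 1 % q)
    (θ : ℝ) (hθ : |θ| < 1/(q:ℝ)^2) (a b x : ℝ) :
    |(∑ n ∈ range q, ((⌈b - (x + n * ((p:ℝ)/q + θ))⌉ - ⌈a - (x + n * ((p:ℝ)/q + θ))⌉ : ℤ) : ℝ))
      - q * (b - a)| ≤ 6 := by
  have key : ∀ n : ℕ, ((⌈b - (x + n * ((p:ℝ)/q + θ))⌉ - ⌈a - (x + n * ((p:ℝ)/q + θ))⌉ : ℤ) : ℝ)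
      = (b - a) + Int.fract ((x - b) + n * ((p:ℝ)/q + θ))
        - Int.fract ((x - a) + n * ((p:ℝ)/q + θ)) := by
    intro n
    push_cast
    rw [ceil_cast_eq, ceil_cast_eq]
    have e1 : -(b - (x + n * ((p:ℝ)/q + θ))) = (x - b) + n * ((p:ℝ)/q + θ) := by ring
    have e2 : -(a - (x + n * ((p:ℝ)/q + θ))) = (x - a) + n * ((p:ℝ)/q + θ) := by ring
    rw [e1, e2]
    ring
  rw [Finset.sum_congr rfl fun n _ => key n]
  have hsum : ∑ n ∈ range q, ((b - a) + Int.fract ((x - b) + n * ((p:ℝ)/q + θ))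
        - Int.fract ((x - a) + n * ((p:ℝ)/q + θ)))
      = q * (b - a) + ((∑ n ∈ range q, Int.fract ((x - b) + n * ((p:ℝ)/q + θ))) - q/2)
        - ((∑ n ∈ range q, Int.fract ((x - a) + n * ((p:ℝ)/q + θ))) - q/2) := by
    rw [Finset.sum_sub_distrib, Finset.sum_add_distrib, Finset.sum_const, Finset.card_range,
      nsmul_eq_mul]
    ring
  rw [hsum]
  have h1 := sum_fract_orbit q hq p u hpu (x - b) θ hθ
  have h2 := sum_fract_orbit q hq p u hpu (x - a) θ hθ
  have e : q * (b - a) + ((∑ n ∈ range q, Int.fract ((x - b) + n * ((p:ℝ)/q + θ))) - q/2)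
        - ((∑ n ∈ range q, Int.fract ((x - a) + n * ((p:ℝ)/q + θ))) - q/2) - q * (b - a)
      = ((∑ n ∈ range q, Int.fract ((x - b) + n * ((p:ℝ)/q + θ))) - q/2)
        - ((∑ n ∈ range q, Int.fract ((x - a) + n * ((p:ℝ)/q + θ))) - q/2) := by ring
  rw [e]
  calc |_ - _| ≤ |(∑ n ∈ range q, Int.fract ((x - b) + n * ((p:ℝ)/q + θ))) - q/2|
        + |(∑ n ∈ range q, Int.fract ((x - a) + n * ((p:ℝ)/q + θ))) - q/2| := abs_sub _ _
    _ ≤ 3 + 3 := by gcongr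
    _ = 6 := by norm_num

lemma mem_arc (a b t : ℝ) :
    ((t : ℝ) : UnitAddCircle) ∈ (fun r : ℝ => (r : UnitAddCircle)) '' Set.Ico a b
      ↔ ∃ k : ℤ, a ≤ t + k ∧ t + (k:ℝ) < b := by
  constructor
  · rintro ⟨s, hs, hst⟩
    have : ∃ k : ℤ, s - t = k := by
      have h2 := QuotientAddGroup.eq_iff_sub_mem.1 hst
      rw [AddSubgroup.mem_zmultiples_iff] at h2
      obtain ⟨k, hk⟩ := h2
      exact ⟨k, by simpa [zsmul_eq_mul] using hk.symm⟩
    obtain ⟨k, hk⟩ := this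
    exact ⟨k, by linarith [hs.1, hk.symm ▸ (rfl : s - t = s - t)], by nlinarith [hs.2]⟩
  · rintro ⟨k, h1, h2⟩
    refine ⟨t + k, ⟨h1, h2⟩, ?_⟩
    show ((t + (k:ℝ) : ℝ) : UnitAddCircle) = ((t:ℝ) : UnitAddCircle)
    rw [QuotientAddGroup.eq_iff_sub_mem, AddSubgroup.mem_zmultiples_iff]
    exact ⟨k, by simp [zsmul_eq_mul]⟩

lemma arc_measurable (a b : ℝ) :
    MeasurableSet ((fun r : ℝ => (r : UnitAddCircle)) '' Set.Ico a b) := by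
  rcases le_or_gt b a with h | h
  · rw [Set.Ico_eq_empty (not_lt.2 h), Set.image_empty]
    exact MeasurableSet.empty
  · rw [← Set.Ioo_insert_left h, Set.image_insert_eq]
    apply MeasurableSet.insert
    have hopen : IsOpen ((fun r : ℝ => (r : UnitAddCircle)) '' Set.Ioo a b) :=
      QuotientAddGroup.isOpenMap_coe _ isOpen_Ioo
    exact hopen.measurableSet

lemma arc_volume (a b : ℝ) (hab : a ≤ b) (hb1 : b ≤ a + 1) :
    volume ((fun r : ℝ => (r : UnitAddCircle)) '' Set.Ico a b) = ENNReal.ofReal (b - a) := by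
  set S := (fun r : ℝ => (r : UnitAddCircle)) '' Set.Ico a b with hS
  have mp := AddCircle.measurePreserving_mk 1 a
  have hmeas := arc_measurable a b
  have hpre : (volume.restrict (Set.Ioc a (a + 1)))
      ((fun r : ℝ => (r : UnitAddCircle)) ⁻¹' S) = volume S :=
    mp.measure_preimage hmeas.nullMeasurableSet
  rw [Measure.restrict_apply (AddCircle.measurable_mk' hmeas)] at hpre
  set T := (fun r : ℝ => (r : UnitAddCircle)) ⁻¹' S ∩ Set.Ioc a (a + 1) with hT
  have hsub1 : Set.Ioo a b ⊆ T := by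
    intro x hx
    refine ⟨?_, hx.1, by linarith [hx.2]⟩
    show ((x : ℝ) : UnitAddCircle) ∈ S
    rw [hS, mem_arc]
    exact ⟨0, by simpa using hx.1.le, by simpa using hx.2⟩
  have hsub2 : T ⊆ Set.Ioc a b ∪ {a + 1} := by
    rintro x ⟨hxS, hx1, hx2⟩
    obtain ⟨k, hk1, hk2⟩ := (mem_arc a b x).1 hxS
    have hk0 : k = 0 ∨ k = -1 := by
      have l1 : (-1 : ℝ) ≤ k := by linarith
      have l2 : (k : ℝ) < 1 := by linarith
      have l1' : (-1 : ℤ) ≤ k := by exact_mod_cast l1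
      have l2' : k < (1 : ℤ) := by exact_mod_cast l2
      omega
    rcases hk0 with h | h
    · subst h
      left
      simp only [Int.cast_zero, add_zero] at hk1 hk2
      exact ⟨hx1, hk2.le⟩
    · subst h
      right
      simp only [Int.cast_neg, Int.cast_one] at hk1
      have : a + 1 ≤ x := by linarith
      exact Set.mem_singleton_iff.2 (le_antisymm hx2 this)
  have hub : volume T ≤ ENNReal.ofReal (b - a) := by
    calc volume T ≤ volume (Set.Ioc a b ∪ {a + 1}) := measure_mono hsub2
      _ ≤ volume (Set.Ioc a b) + volume ({a + 1} : Set ℝ) := measure_union_le _ _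
      _ = ENNReal.ofReal (b - a) := by
          rw [Real.volume_Ioc, Real.volume_singleton, add_zero]
  have hlb : ENNReal.ofReal (b - a) ≤ volume T := by
    calc ENNReal.ofReal (b - a) = volume (Set.Ioo a b) := (Real.volume_Ioo).symm
      _ ≤ volume T := measure_mono hsub1
  rw [← hpre]
  exact le_antisymm hub hlb

lemma indicator_iUnion_eq_sum (B : ℕ) (I : Fin B → Set UnitAddCircle)
    (hdisj : Pairwise (Function.onFun Disjoint I)) (z : UnitAddCircle) :
    Set.indicator (⋃ l, I l) (fun _ => (1:ℝ)) z
      = ∑ l : Fin B, Set.indicator (I l) (fun _ => (1:ℝ)) z := by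
  by_cases hz : z ∈ ⋃ l, I l
  · obtain ⟨j, hj⟩ := Set.mem_iUnion.1 hz
    rw [Set.indicator_of_mem hz]
    rw [Finset.sum_eq_single j]
    · rw [Set.indicator_of_mem hj]
    · intro l _ hlj
      exact Set.indicator_of_notMem
        (fun hl => Set.disjoint_left.1 (hdisj hlj) hl hj) _
    · intro h
      exact absurd (Finset.mem_univ j) h
  · rw [Set.indicator_of_notMem hz]
    symm
    apply Finset.sum_eq_zero
    intro l _
    exact Set.indicator_of_notMem (fun hl => hz (Set.mem_iUnion.2 ⟨l, hl⟩)) _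

lemma block_bound (B : ℕ) (I : Fin B → Set UnitAddCircle)
    (hdisj : Pairwise (Function.onFun Disjoint I))
    (a b : Fin B → ℝ) (hab : ∀ l, a l ≤ b l) (hb1 : ∀ l, b l ≤ a l + 1)
    (hIl : ∀ l, I l = (fun r : ℝ => (r : UnitAddCircle)) '' Set.Ico (a l) (b l))
    (hlen : ∑ l : Fin B, (b l - a l) = 1/2)
    (q : ℕ) (hq : 0 < q) (p u : ℤ) (hpu : (p * u) % q = 1 % q)
    (θ : ℝ) (hθ : |θ| < 1/(q:ℝ)^2) (x : ℝ) :
    |∑ n ∈ range q, (2 * Set.indicator (⋃ l, I l) (fun _ => (1:ℝ))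
        (((x + n * ((p:ℝ)/q + θ) : ℝ)) : UnitAddCircle) - 1)| ≤ 12 * B := by
  set β : ℝ := (p:ℝ)/q + θ with hβ
  set c : Fin B → ℕ → ℝ := fun l n =>
    ((⌈b l - (x + n * β)⌉ - ⌈a l - (x + n * β)⌉ : ℤ) : ℝ) with hc
  have hind : ∀ n : ℕ, Set.indicator (⋃ l, I l) (fun _ => (1:ℝ))
      (((x + n * β : ℝ)) : UnitAddCircle) = ∑ l : Fin B, c l n := by
    intro n
    rw [indicator_iUnion_eq_sum B I hdisj]
    refine Finset.sum_congr rfl fun l _ => ?_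
    rw [hIl l]
    exact arc_indicator_eq (a l) (b l) (x + n * β) (hab l) (hb1 l)
  set E : Fin B → ℝ := fun l => (∑ n ∈ range q, c l n) - q * (b l - a l) with hE
  have hEl : ∀ l, |E l| ≤ 6 := fun l => arc_block q hq p u hpu θ hθ (a l) (b l) x
  have main : ∑ n ∈ range q, (2 * Set.indicator (⋃ l, I l) (fun _ => (1:ℝ))
      (((x + n * β : ℝ)) : UnitAddCircle) - 1) = 2 * ∑ l : Fin B, E l := by
    calc ∑ n ∈ range q, (2 * Set.indicator (⋃ l, I l) (fun _ => (1:ℝ))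
          (((x + n * β : ℝ)) : UnitAddCircle) - 1)
        = ∑ n ∈ range q, (2 * (∑ l : Fin B, c l n) - 1) := by
          refine Finset.sum_congr rfl fun n _ => by rw [hind n]
      _ = 2 * (∑ n ∈ range q, ∑ l : Fin B, c l n) - q := by
          rw [Finset.sum_sub_distrib, ← Finset.mul_sum, Finset.sum_const, Finset.card_range,
            nsmul_eq_mul, mul_one]
      _ = 2 * (∑ l : Fin B, ∑ n ∈ range q, c l n) - q := by rw [Finset.sum_comm]
      _ = 2 * (∑ l : Fin B, (E l + q * (b l - a l))) - q := by
          refine congrArg (fun z => 2 * z - (q:ℝ)) ?_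
          refine Finset.sum_congr rfl fun l _ => by rw [hE]; ring
      _ = 2 * ((∑ l : Fin B, E l) + q * (1/2)) - q := by
          rw [Finset.sum_add_distrib, ← Finset.mul_sum, hlen]
      _ = 2 * ∑ l : Fin B, E l := by ring
  rw [main, abs_mul, abs_of_nonneg (by norm_num : (0:ℝ) ≤ 2)]
  calc 2 * |∑ l : Fin B, E l| ≤ 2 * ∑ l : Fin B, |E l| := by
        gcongr
        exact Finset.abs_sum_le_sum_abs _ _
    _ ≤ 2 * ∑ l : Fin B, (6:ℝ) := by
        gcongr with l
        exact hEl l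
    _ = 12 * B := by
        rw [Finset.sum_const, Finset.card_univ, Fintype.card_fin, nsmul_eq_mul]
        ring

lemma dioph_of_not_liouville {α : ℝ} (hα : α ∈ Set.Ioo (0:ℝ) 1) (hirr : Irrational α)
    (hL : ¬ Liouville α) :
    ∃ v : ℕ, 2 ≤ v ∧ ∃ c : ℝ, 0 < c ∧ c ≤ 1 ∧
      ∀ p : ℤ, ∀ q : ℕ, 1 ≤ q → c / (q:ℝ)^v ≤ |α - p / q| := by
  rw [Liouville] at hL
  push_neg at hL
  obtain ⟨n, hn⟩ := hL
  refine ⟨max n 2, le_max_right _ _, min (min α (1 - α)) 1,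
    lt_min (lt_min hα.1 (by linarith [hα.2])) one_pos, min_le_right _ _, ?_⟩
  intro p q hq
  rcases eq_or_lt_of_le hq with h1 | h2
  · -- q = 1
    have hq1 : (q:ℝ) = 1 := by exact_mod_cast h1.symm
    rw [hq1, one_pow, div_one, div_one]
    rcases le_or_gt (p:ℝ) 0 with hp | hp
    · have : α - p ≥ α := by linarith
      calc min (min α (1 - α)) 1 ≤ α := (min_le_left _ _).trans (min_le_left _ _)
        _ ≤ |α - p| := by rw [abs_of_pos (by linarith [hα.1])]; linarith
    · have hp1 : (1:ℝ) ≤ p := by exact_mod_cast hp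
      calc min (min α (1 - α)) 1 ≤ 1 - α := (min_le_left _ _).trans (min_le_right _ _)
        _ ≤ |α - p| := by rw [abs_of_neg (by linarith [hα.2])]; linarith
  · -- q ≥ 2
    have hb : (1:ℤ) < (q:ℤ) := by exact_mod_cast h2
    have hne : α ≠ (p:ℝ) / (q:ℤ) := by
      intro he
      apply hirr
      exact ⟨(p:ℚ)/(q:ℚ), by push_cast at he ⊢; exact he.symm⟩
    have hkey := hn p q hb hne
    have hq0 : (0:ℝ) < q := by positivity
    have hqn : (1:ℝ) ≤ (q:ℝ) := by exact_mod_cast hq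
    have hpow : (q:ℝ)^n ≤ (q:ℝ)^(max n 2) := pow_le_pow_right₀ hqn (le_max_left _ _)
    calc min (min α (1 - α)) 1 / (q:ℝ)^(max n 2) ≤ 1 / (q:ℝ)^(max n 2) := by
          apply div_le_div_of_nonneg_right ?_ (by positivity)
          · exact min_le_right _ _
      _ ≤ 1 / (q:ℝ)^n := by
          apply div_le_div_of_nonneg_left (by norm_num) (by positivity) hpow
      _ ≤ |α - p / q| := hkey

lemma good_q {α : ℝ} (v : ℕ) (c : ℝ) (hc : 0 < c)
    (hdio : ∀ p : ℤ, ∀ q : ℕ, 1 ≤ q → c / (q:ℝ)^v ≤ |α - p / q|)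
    (Q : ℕ) (hQ : 0 < Q) :
    ∃ (q : ℕ) (p u : ℤ), 1 ≤ q ∧ q ≤ Q ∧ (p * u) % q = 1 % q ∧
      |α - p / q| < 1 / (q:ℝ)^2 ∧ c * Q ≤ (q:ℝ)^v := by
  obtain ⟨j, k, hk0, hkQ, hjk⟩ := Real.exists_int_int_abs_mul_sub_le α hQ
  set g : ℕ := Int.gcd j k with hg
  have hg0 : 0 < g := Int.gcd_pos_iff.2 (Or.inr hk0.ne')
  have hdvdj : (g:ℤ) ∣ j := Int.gcd_dvd_left j k
  have hdvdk : (g:ℤ) ∣ k := Int.gcd_dvd_right j k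
  set j₁ : ℤ := j / g with hj₁
  set k₁ : ℤ := k / g with hk₁
  have hkeq : k = g * k₁ := (Int.mul_ediv_cancel' hdvdk).symm
  have hjeq : j = g * j₁ := (Int.mul_ediv_cancel' hdvdj).symm
  have hk₁0 : 0 < k₁ := by
    rcases le_or_gt k₁ 0 with h | h
    · exfalso
      have : (g:ℤ) * k₁ ≤ 0 := mul_nonpos_iff.2 (Or.inl ⟨by positivity, h⟩)
      omega
    · exact h
  have hcop : Int.gcd j₁ k₁ = 1 := Int.gcd_div_gcd_div_gcd hg0
  set q : ℕ := k₁.toNat with hqdef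
  have hqk : (q:ℤ) = k₁ := Int.toNat_of_nonneg hk₁0.le
  have hq1 : 1 ≤ q := by omega
  have hqQ : q ≤ Q := by
    have : k₁ ≤ k := by nlinarith [hkeq, hk₁0, (by exact_mod_cast hg0 : (0:ℤ) < (g:ℤ))]
    omega
  -- modular inverse
  obtain ⟨u', v', huv⟩ := (Int.isCoprime_iff_gcd_eq_one.2 hcop)
  have hmod : (j₁ * u') % (q:ℤ) = 1 % (q:ℤ) := by
    rw [hqk]
    have hdvd : k₁ ∣ 1 - j₁ * u' := ⟨v', by linarith⟩
    exact Int.modEq_iff_dvd.2 hdvd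
  -- approximation quality
  have hkR : (0:ℝ) < (k:ℝ) := by exact_mod_cast hk0
  have hk₁R : (0:ℝ) < (k₁:ℝ) := by exact_mod_cast hk₁0
  have hgR : (0:ℝ) < (g:ℝ) := by exact_mod_cast hg0
  have hQR : (0:ℝ) < (Q:ℝ) := by exact_mod_cast hQ
  have hfrac : (j:ℝ) / k = (j₁:ℝ) / k₁ := by
    rw [hjeq, hkeq]
    push_cast
    rw [mul_div_mul_left _ _ hgR.ne']
  have happrox : |α - (j₁:ℝ) / k₁| ≤ 1 / ((k:ℝ) * (Q + 1)) := by
    rw [← hfrac]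
    have e : α - (j:ℝ)/k = ((k:ℝ) * α - j) / k := by field_simp
    rw [e, abs_div, abs_of_pos hkR, div_le_div_iff₀ hkR (by positivity)]
    calc |(k:ℝ) * α - j| * ((k:ℝ) * (Q+1)) ≤ (1/((Q:ℝ)+1)) * ((k:ℝ) * (Q+1)) := by
          apply mul_le_mul_of_nonneg_right hjk (by positivity)
      _ = 1 * k := by field_simp
  have hcast : ((q:ℕ):ℝ) = (k₁:ℝ) := by exact_mod_cast congrArg (Int.cast : ℤ → ℝ) hqk
  have hkk₁ : (k₁:ℝ) ≤ (k:ℝ) := by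
    have : k₁ ≤ k := by nlinarith [hkeq, hk₁0, (by exact_mod_cast hg0 : (0:ℤ) < (g:ℤ))]
    exact_mod_cast this
  have happrox2 : |α - (j₁:ℝ) / q| ≤ 1 / ((q:ℝ) * (Q + 1)) := by
    rw [hcast]
    refine happrox.trans ?_
    apply div_le_div_of_nonneg_left (by norm_num) (by positivity) ?_
    apply mul_le_mul_of_nonneg_right hkk₁ (by positivity)
  have hstrict : |α - (j₁:ℝ) / q| < 1 / (q:ℝ)^2 := by
    refine happrox2.trans_lt ?_
    have hqR : (0:ℝ) < (q:ℝ) := by rw [hcast]; exact hk₁R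
    apply div_lt_div_of_pos_left (by norm_num) (by positivity)
    have : (q:ℝ) < (Q:ℝ) + 1 := by
      have : (q:ℝ) ≤ Q := by exact_mod_cast hqQ
      linarith
    calc (q:ℝ)^2 = (q:ℝ) * q := sq (q:ℝ) ▸ rfl
      _ < (q:ℝ) * ((Q:ℝ)+1) := by exact mul_lt_mul_of_pos_left this hqR
  have hlow : c * Q ≤ (q:ℝ)^v := by
    have hd := hdio j₁ q hq1
    have hqR : (0:ℝ) < (q:ℝ) := by rw [hcast]; exact hk₁R
    have h1 : c / (q:ℝ)^v ≤ 1 / ((q:ℝ) * (Q + 1)) := hd.trans happrox2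
    rw [div_le_div_iff₀ (by positivity) (by positivity)] at h1
    -- c * (q * (Q+1)) ≤ 1 * q^v
    have hq1R : (1:ℝ) ≤ (q:ℝ) := by exact_mod_cast hq1
    have l0 : (Q:ℝ) + 1 ≤ (q:ℝ) * ((Q:ℝ)+1) := by
      nlinarith [mul_nonneg (by linarith : (0:ℝ) ≤ (q:ℝ)-1) (by linarith : (0:ℝ) ≤ (Q:ℝ)+1)]
    have l1 : c * Q ≤ c * ((q:ℝ) * ((Q:ℝ)+1)) :=
      mul_le_mul_of_nonneg_left (by linarith) hc.le
    linarith
  exact ⟨q, j₁, u', hq1, hqQ, hmod, hstrict, hlow⟩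

lemma sum_blocks (G : ℕ → ℝ) (hG : ∀ n, |G n| ≤ 1) (q : ℕ) (hq : 0 < q)
    (Kb : ℝ) (hKb : 0 ≤ Kb)
    (hblock : ∀ m : ℕ, |∑ n ∈ Finset.Ioc m (m+q), G n| ≤ Kb) :
    ∀ N : ℕ, |∑ n ∈ Finset.Ioc 0 N, G n| ≤ Kb * ((N:ℝ) / q) + q := by
  intro N
  have hqR : (0:ℝ) < q := by exact_mod_cast hq
  induction N using Nat.strong_induction_on with
  | _ N ih =>
    rcases lt_or_ge N q with h | h
    · have h1 : |∑ n ∈ Finset.Ioc 0 N, G n| ≤ (N:ℝ) := by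
        calc |∑ n ∈ Finset.Ioc 0 N, G n| ≤ ∑ n ∈ Finset.Ioc 0 N, |G n| :=
              Finset.abs_sum_le_sum_abs _ _
          _ ≤ ∑ _n ∈ Finset.Ioc 0 N, (1:ℝ) := Finset.sum_le_sum fun n _ => hG n
          _ = (N:ℝ) := by rw [Finset.sum_const, Nat.card_Ioc, nsmul_eq_mul, mul_one]; simp
      have h2 : (N:ℝ) ≤ q := by exact_mod_cast h.le
      have h3 : 0 ≤ Kb * ((N:ℝ)/q) := mul_nonneg hKb (by positivity)
      linarith
    · have hsplit : (∑ n ∈ Finset.Ioc 0 (N - q), G n) + (∑ n ∈ Finset.Ioc (N - q) N, G n)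
          = ∑ n ∈ Finset.Ioc 0 N, G n :=
        Finset.sum_Ioc_consecutive G (Nat.zero_le _) (Nat.sub_le N q)
      have hNq : N - q + q = N := Nat.sub_add_cancel h
      have hblk : |∑ n ∈ Finset.Ioc (N - q) N, G n| ≤ Kb := by
        have := hblock (N - q)
        rwa [hNq] at this
      have hih := ih (N - q) (by omega)
      have hcast : ((N - q : ℕ):ℝ) = (N:ℝ) - q := by
        rw [Nat.cast_sub h]
      have e : Kb * (((N:ℝ) - q)/q) + Kb = Kb * ((N:ℝ)/q) := by
        field_simp
        ring
      calc |∑ n ∈ Finset.Ioc 0 N, G n|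
          = |(∑ n ∈ Finset.Ioc 0 (N - q), G n) + (∑ n ∈ Finset.Ioc (N - q) N, G n)| := by
            rw [hsplit]
        _ ≤ |∑ n ∈ Finset.Ioc 0 (N - q), G n| + |∑ n ∈ Finset.Ioc (N - q) N, G n| := abs_add_le _ _
        _ ≤ (Kb * (((N - q):ℕ) / (q:ℝ)) + q) + Kb := by gcongr
        _ = Kb * ((N:ℝ)/q) + q := by rw [hcast]; linarith [e]

lemma abel_formula (G : ℕ → ℝ) :
    ∀ N : ℕ, 1 ≤ N →
      (∑ n ∈ Finset.Ioc 0 N, G n * (1/(n:ℝ)))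
        = (∑ n ∈ Finset.Ioc 0 N, G n) / N
          + ∑ m ∈ Finset.range N, (∑ n ∈ Finset.Ioc 0 m, G n) / (m * (m+1)) := by
  intro N
  induction N with
  | zero => intro h; omega
  | succ N ih =>
    intro _
    rcases Nat.eq_zero_or_pos N with h0 | hN
    · subst h0
      simp [show Finset.Ioc 0 1 = {1} from rfl]
    · have hNR : (0:ℝ) < N := by exact_mod_cast hN
      have hstep : ∑ n ∈ Finset.Ioc 0 (N+1), G n = (∑ n ∈ Finset.Ioc 0 N, G n) + G (N+1) := by
        rw [← Finset.sum_Ioc_succ_top (Nat.zero_le _)]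
      have hstep2 : ∑ n ∈ Finset.Ioc 0 (N+1), G n * (1/(n:ℝ))
          = (∑ n ∈ Finset.Ioc 0 N, G n * (1/(n:ℝ))) + G (N+1) * (1/((N:ℝ)+1)) := by
        rw [Finset.sum_Ioc_succ_top (Nat.zero_le N)]
        push_cast
        ring
      have hrange : ∑ m ∈ Finset.range (N+1), (∑ n ∈ Finset.Ioc 0 m, G n) / ((m:ℝ) * (m+1))
          = (∑ m ∈ Finset.range N, (∑ n ∈ Finset.Ioc 0 m, G n) / ((m:ℝ) * (m+1)))
            + (∑ n ∈ Finset.Ioc 0 N, G n) / ((N:ℝ) * (N+1)) := by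
        rw [Finset.sum_range_succ]
      rw [hstep2, ih hN, hstep, hrange]
      push_cast
      field_simp
      ring

open Filter Topology in
lemma converges_of_growth (G : ℕ → ℝ) (C δ : ℝ) (hC : 0 < C) (hδ : 0 < δ) (N₀ : ℕ)
    (hgrow : ∀ N : ℕ, N₀ ≤ N → |∑ n ∈ Finset.Ioc 0 N, G n| ≤ C * (N:ℝ) ^ ((1:ℝ) - δ)) :
    ∃ L : ℝ, Tendsto (fun N : ℕ => ∑ n ∈ Finset.Ioc 0 N, G n * (1/(n:ℝ))) atTop (𝓝 L) := by
  set S : ℕ → ℝ := fun N => ∑ n ∈ Finset.Ioc 0 N, G n with hS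
  set g : ℕ → ℝ := fun m => S m / ((m:ℝ) * (m+1)) with hg
  have hsummable : Summable g := by
    apply Summable.of_norm_bounded_eventually (g := fun m : ℕ => C * (1/(m:ℝ)^((1:ℝ)+δ)))
      ((Real.summable_one_div_nat_rpow.2 (by linarith)).mul_left C)
    rw [Nat.cofinite_eq_atTop, eventually_atTop]
    refine ⟨max N₀ 1, fun m hm => ?_⟩
    have hm1 : 1 ≤ m := le_trans (le_max_right _ _) hm
    have hm0 : (0:ℝ) < m := by exact_mod_cast hm1
    have hmN : N₀ ≤ m := le_trans (le_max_left _ _) hm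
    have hb := hgrow m hmN
    have e1 : (m:ℝ)^((1:ℝ)-δ) * (m:ℝ)^((1:ℝ)+δ) = (m:ℝ)^2 := by
      rw [← Real.rpow_add hm0, show ((1:ℝ)-δ+(1+δ)) = ((2:ℕ):ℝ) by push_cast; ring,
        Real.rpow_natCast]
    have hden : (0:ℝ) < (m:ℝ) * ((m:ℝ)+1) := by positivity
    rw [Real.norm_eq_abs, hg]
    have habs : |S m / ((m:ℝ) * (m+1))| = |S m| / ((m:ℝ) * ((m:ℝ)+1)) := by
      rw [abs_div, abs_of_pos hden]
    rw [habs]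
    have step1 : |S m| / ((m:ℝ) * ((m:ℝ)+1)) ≤ (C * (m:ℝ)^((1:ℝ)-δ)) / ((m:ℝ) * ((m:ℝ)+1)) := by
      gcongr
    refine step1.trans ?_
    rw [div_le_iff₀ hden, mul_one_div, div_mul_eq_mul_div, le_div_iff₀ (by positivity)]
    calc C * (m:ℝ)^((1:ℝ)-δ) * (m:ℝ)^((1:ℝ)+δ) = C * (m:ℝ)^2 := by rw [mul_assoc, e1]
      _ ≤ C * ((m:ℝ) * ((m:ℝ)+1)) := by nlinarith
  have hlim1 : Tendsto (fun N => ∑ m ∈ Finset.range N, g m) atTop (𝓝 (∑' m, g m)) :=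
    hsummable.hasSum.tendsto_sum_nat
  have hlim2 : Tendsto (fun N : ℕ => S N / N) atTop (𝓝 0) := by
    apply squeeze_zero_norm' (a := fun N : ℕ => C * (N:ℝ)^(-δ))
    · rw [eventually_atTop]
      refine ⟨max N₀ 1, fun m hm => ?_⟩
      have hm1 : 1 ≤ m := le_trans (le_max_right _ _) hm
      have hm0 : (0:ℝ) < m := by exact_mod_cast hm1
      have hb := hgrow m (le_trans (le_max_left _ _) hm)
      have e1 : (m:ℝ)^((1:ℝ)-δ) = (m:ℝ) * (m:ℝ)^(-δ) := by
        rw [show ((1:ℝ)-δ) = 1 + (-δ) by ring, Real.rpow_add hm0, Real.rpow_one]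
      rw [Real.norm_eq_abs, abs_div, abs_of_pos hm0, div_le_iff₀ hm0]
      calc |S m| ≤ C * (m:ℝ)^((1:ℝ)-δ) := hb
        _ = C * (m:ℝ)^(-δ) * m := by rw [e1]; ring
    · have h1 : Tendsto (fun x : ℝ => C * x^(-δ)) atTop (𝓝 (C * 0)) :=
        (tendsto_rpow_neg_atTop hδ).const_mul C
      rw [mul_zero] at h1
      exact h1.comp tendsto_natCast_atTop_atTop
  refine ⟨0 + ∑' m, g m, Tendsto.congr' ?_ (hlim2.add hlim1)⟩
  rw [EventuallyEq, eventually_atTop]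
  exact ⟨1, fun N hN => (abel_formula G N hN).symm⟩

/-- An arc (interval) in the circle `S¹ = ℝ/ℤ`. -/
def IsArc (I : Set UnitAddCircle) : Prop :=
  ∃ a b : ℝ, I = (fun t : ℝ => (t : UnitAddCircle)) '' Set.Ico a b

/-- `f = 2·χ_U − 1`, where `U ⊆ S¹` is a union of `B` pairwise disjoint
intervals with Lebesgue measure `m(U) = 1/2`. -/
def IsMeanZeroIndicator (B : ℕ) (f : UnitAddCircle → ℝ) : Prop :=
  ∃ I : Fin B → Set UnitAddCircle,
    (∀ l, IsArc (I l)) ∧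
    Pairwise (Function.onFun Disjoint I) ∧
    volume (⋃ l, I l) = 1 / 2 ∧
    f = fun x => 2 * Set.indicator (⋃ l, I l) (fun _ => (1 : ℝ)) x - 1

set_option maxHeartbeats 1000000 in
/-- **Theorem 2.** If `α ∈ (0,1)` is irrational and the series `Σ f(T^n 0)·(1/n)`
diverges for some mean-zero indicator function `f`, then `α` is Liouville. -/
theorem divergent_alpha_is_liouville (α : ℝ) (hα : α ∈ Set.Ioo (0 : ℝ) 1)
    (hirr : Irrational α)
    (f : UnitAddCircle → ℝ) (hf : ∃ B : ℕ, IsMeanZeroIndicator B f)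
    (hdiv : ¬ ∃ L : ℝ,
      Tendsto (fun N : ℕ => ∑ n ∈ Finset.Icc 1 N,
          f ((0 : UnitAddCircle) + n • (α : UnitAddCircle)) * (1 / (n : ℝ)))
        atTop (𝓝 L)) :
    Liouville α := by
  by_contra hL
  obtain ⟨B, I, harc, hdisj, hvol, hfdef⟩ := hf
  -- normalize the arcs
  have hnorm : ∀ l, ∃ aa bb : ℝ, aa ≤ bb ∧ bb ≤ aa + 1 ∧
      I l = (fun r : ℝ => (r : UnitAddCircle)) '' Set.Ico aa bb := by
    intro l
    obtain ⟨a0, b0, h0⟩ := harc l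
    rcases le_or_gt b0 a0 with h | h
    · refine ⟨0, 0, le_refl 0, by norm_num, ?_⟩
      rw [h0, Set.Ico_eq_empty (not_lt.2 h), Set.Ico_self, Set.image_empty]
    rcases le_or_gt b0 (a0 + 1) with h1 | h1
    · exact ⟨a0, b0, h.le, h1, h0⟩
    · exfalso
      have huniv : I l = Set.univ := by
        apply Set.eq_univ_of_univ_subset
        rw [← AddCircle.coe_image_Ico_eq (1:ℝ) a0, h0]
        exact Set.image_mono (Set.Ico_subset_Ico (le_refl a0) (by linarith))
      have hle : volume (I l) ≤ volume (⋃ l', I l') := measure_mono (Set.subset_iUnion I l)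
      rw [huniv, hvol, AddCircle.measure_univ] at hle
      norm_num at hle
  choose aa bb hab hb1 hIl using hnorm
  have hmeasI : ∀ l, MeasurableSet (I l) := fun l => by rw [hIl l]; exact arc_measurable _ _
  have hsum2 : ∑ l : Fin B, volume (I l) = 1/2 := by
    rw [← tsum_fintype (L := SummationFilter.unconditional _), ← MeasureTheory.measure_iUnion hdisj hmeasI, hvol]
  have hvols : ∀ l, volume (I l) = ENNReal.ofReal (bb l - aa l) := fun l => by
    rw [hIl l]; exact arc_volume _ _ (hab l) (hb1 l)
  have hlen : ∑ l : Fin B, (bb l - aa l) = 1/2 := by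
    have h1 : ENNReal.ofReal (∑ l : Fin B, (bb l - aa l)) = ENNReal.ofReal (1/2) := by
      rw [ENNReal.ofReal_sum_of_nonneg (fun l _ => by linarith [hab l])]
      rw [Finset.sum_congr rfl (fun l _ => (hvols l).symm), hsum2]
      rw [one_div, one_div, ENNReal.ofReal_inv_of_pos (by norm_num), ENNReal.ofReal_ofNat]
    exact (ENNReal.ofReal_eq_ofReal_iff
      (Finset.sum_nonneg fun l _ => by linarith [hab l]) (by norm_num)).1 h1
  -- the sequence
  set G : ℕ → ℝ := fun n => 2 * Set.indicator (⋃ l, I l) (fun _ => (1:ℝ))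
      (((n * α : ℝ)) : UnitAddCircle) - 1 with hGdef
  have hG1 : ∀ n, |G n| ≤ 1 := by
    intro n
    have hGn : G n = 2 * Set.indicator (⋃ l, I l) (fun _ => (1:ℝ))
        (((n * α : ℝ)) : UnitAddCircle) - 1 := rfl
    rw [hGn]
    by_cases hmem : (((n * α : ℝ)) : UnitAddCircle) ∈ ⋃ l, I l
    · rw [Set.indicator_of_mem hmem]; norm_num
    · rw [Set.indicator_of_notMem hmem]; norm_num
  -- Diophantine data
  obtain ⟨v, hv2, c, hc, hc1, hdio⟩ := dioph_of_not_liouville hα hirr hL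
  have hvR : (0:ℝ) < v := by
    have : (0:ℕ) < v := by omega
    exact_mod_cast this
  set δ : ℝ := 1/(2*v) with hδdef
  have hδpos : 0 < δ := by rw [hδdef]; positivity
  have hδ4 : δ ≤ 1/4 := by
    rw [hδdef]
    have h2v : (2:ℝ) ≤ v := by exact_mod_cast hv2
    rw [div_le_div_iff₀ (by linarith) (by norm_num)]
    linarith
  set C : ℝ := 24 * B / c + 1 with hC
  have hCpos : 0 < C := by rw [hC]; positivity
  have hgrow : ∀ N : ℕ, 4 ≤ N → |∑ n ∈ Finset.Ioc 0 N, G n| ≤ C * (N:ℝ)^((1:ℝ)-δ) := by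
    intro N hN4
    set Q := Nat.sqrt N with hQdef
    have hQ2 : 2 ≤ Q := Nat.le_sqrt.2 (by omega)
    obtain ⟨q, p, uu, hq1, hqQ, hmod, hstrict, hlow⟩ := good_q v c hc hdio Q (by omega)
    set θ : ℝ := α - (p:ℝ)/q with hθdef
    have hαθ : α = (p:ℝ)/q + θ := by rw [hθdef]; ring
    have hblock : ∀ m : ℕ, |∑ n ∈ Finset.Ioc m (m+q), G n| ≤ 12 * B := by
      intro m
      have hreindex : ∑ n ∈ Finset.Ioc m (m+q), G n = ∑ j ∈ Finset.range q, G (m+1+j) := by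
        rw [show Finset.Ioc m (m+q) = Finset.Ico (m+1) (m+1+q) by
          ext x; simp only [Finset.mem_Ioc, Finset.mem_Ico]; omega]
        rw [Finset.sum_Ico_eq_sum_range, show m+1+q - (m+1) = q from by omega]
      rw [hreindex]
      have hGeq : ∀ j ∈ Finset.range q, G (m+1+j)
          = 2 * Set.indicator (⋃ l, I l) (fun _ => (1:ℝ))
              (((((m:ℝ)+1) * α + j * ((p:ℝ)/q + θ) : ℝ)) : UnitAddCircle) - 1 := by
        intro j _
        have hre : ((m+1+j : ℕ) : ℝ) * α = ((m:ℝ)+1) * α + j * ((p:ℝ)/q + θ) := by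
          rw [← hαθ]
          push_cast
          ring
        have hGn : G (m+1+j) = 2 * Set.indicator (⋃ l, I l) (fun _ => (1:ℝ))
            ((((m+1+j : ℕ):ℝ) * α : ℝ) : UnitAddCircle) - 1 := rfl
        rw [hGn, hre]
      rw [Finset.sum_congr rfl hGeq]
      exact block_bound B I hdisj aa bb hab hb1 hIl hlen q hq1 p uu hmod θ hstrict
        (((m:ℝ)+1) * α)
    have hSb := sum_blocks G hG1 q hq1 (12*B) (by positivity) hblock N
    -- real estimates
    have hNR : (4:ℝ) ≤ N := by exact_mod_cast hN4
    have hN0 : (0:ℝ) < N := by linarith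
    have hqR : (0:ℝ) < q := by exact_mod_cast hq1
    have hQsq : ((Q:ℝ))^2 ≤ N := by
      have := Nat.sqrt_le' N
      exact_mod_cast this
    have hQR : (Q:ℝ) ≤ Real.sqrt N := (Real.le_sqrt (by positivity) hN0.le).2 hQsq
    have hsN2 : (2:ℝ) ≤ Real.sqrt N := (Real.le_sqrt (by norm_num) hN0.le).2 (by nlinarith)
    have hsNQ1 : Real.sqrt N < (Q:ℝ) + 1 := by
      apply (Real.sqrt_lt' (by positivity)).2
      have := Nat.lt_succ_sqrt' N
      push_cast
      exact_mod_cast this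
    have hQhalf : Real.sqrt N / 2 ≤ (Q:ℝ) := by linarith
    have hqv : (c/2) * Real.sqrt N ≤ (q:ℝ)^v := by
      have h' : c * (Real.sqrt N / 2) ≤ c * Q := mul_le_mul_of_nonneg_left hQhalf hc.le
      calc (c/2) * Real.sqrt N = c * (Real.sqrt N / 2) := by ring
        _ ≤ c * Q := h'
        _ ≤ (q:ℝ)^v := hlow
    have hrws : Real.sqrt (N:ℝ) = (N:ℝ)^((1:ℝ)/2) := Real.sqrt_eq_rpow _
    have hqlow : (c/2) * (N:ℝ)^δ ≤ (q:ℝ) := by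
      have h1 : ((c/2) * Real.sqrt N)^((1:ℝ)/v) ≤ ((q:ℝ)^v)^((1:ℝ)/v) :=
        Real.rpow_le_rpow (by positivity) hqv (by positivity)
      have h2 : (((q:ℝ)^v : ℝ))^((1:ℝ)/v) = (q:ℝ) := by
        rw [← Real.rpow_natCast (q:ℝ) v, ← Real.rpow_mul hqR.le]
        rw [mul_one_div, div_self hvR.ne', Real.rpow_one]
      have h3 : ((c/2) * Real.sqrt N)^((1:ℝ)/v)
          = (c/2)^((1:ℝ)/v) * ((N:ℝ)^((1:ℝ)/2))^((1:ℝ)/v) := by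
        rw [hrws, Real.mul_rpow (by positivity) (by positivity)]
      have h4 : (((N:ℝ)^((1:ℝ)/2) : ℝ))^((1:ℝ)/v) = (N:ℝ)^δ := by
        rw [← Real.rpow_mul hN0.le, hδdef]
        congr 1
        field_simp
      have h5 : (c/2) ≤ (c/2)^((1:ℝ)/v) := by
        have h1v : (1:ℝ)/v ≤ 1 := by
          rw [div_le_one hvR]
          have h2v : (2:ℝ) ≤ (v:ℝ) := by exact_mod_cast hv2
          linarith
        have := Real.rpow_le_rpow_of_exponent_ge (by positivity : (0:ℝ) < c/2)
          (by linarith : c/2 ≤ 1) h1v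
        rwa [Real.rpow_one] at this
      calc (c/2) * (N:ℝ)^δ ≤ (c/2)^((1:ℝ)/v) * (N:ℝ)^δ :=
            mul_le_mul_of_nonneg_right h5 (by positivity)
        _ = ((c/2) * Real.sqrt N)^((1:ℝ)/v) := by rw [h3, h4]
        _ ≤ ((q:ℝ)^v)^((1:ℝ)/v) := h1
        _ = (q:ℝ) := h2
    have hNq : (N:ℝ)/q ≤ (2/c) * (N:ℝ)^((1:ℝ)-δ) := by
      have hd : (0:ℝ) < (c/2) * (N:ℝ)^δ := by positivity
      have h1 : (N:ℝ)/q ≤ (N:ℝ)/((c/2) * (N:ℝ)^δ) :=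
        div_le_div_of_nonneg_left hN0.le hd hqlow
      have h2 : (N:ℝ)/((c/2) * (N:ℝ)^δ) = (2/c) * (N:ℝ)^((1:ℝ)-δ) := by
        rw [show ((1:ℝ)-δ) = 1 + (-δ) by ring, Real.rpow_add hN0, Real.rpow_one,
          Real.rpow_neg hN0.le]
        rw [div_eq_iff (by positivity)]
        field_simp
        try ring
      rw [h2] at h1
      exact h1
    have hqup : (q:ℝ) ≤ (N:ℝ)^((1:ℝ)-δ) := by
      have h1 : (q:ℝ) ≤ Q := by exact_mod_cast hqQ
      have h2 : (Q:ℝ) ≤ (N:ℝ)^((1:ℝ)/2) := by rw [← hrws]; exact hQR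
      have h3 : (N:ℝ)^((1:ℝ)/2) ≤ (N:ℝ)^((1:ℝ)-δ) :=
        Real.rpow_le_rpow_of_exponent_le (by linarith) (by linarith)
      linarith
    calc |∑ n ∈ Finset.Ioc 0 N, G n| ≤ 12*B * ((N:ℝ)/q) + q := hSb
      _ ≤ 12*B * ((2/c) * (N:ℝ)^((1:ℝ)-δ)) + (N:ℝ)^((1:ℝ)-δ) := by gcongr <;> positivity
      _ = C * (N:ℝ)^((1:ℝ)-δ) := by rw [hC]; field_simp; ring
  obtain ⟨L, hLconv⟩ := converges_of_growth G C δ hCpos hδpos 4 hgrow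
  apply hdiv
  refine ⟨L, ?_⟩
  apply hLconv.congr
  intro N
  have hIccIoc : Finset.Ioc 0 N = Finset.Icc 1 N := by
    ext x
    simp only [Finset.mem_Icc, Finset.mem_Ioc]
    omega
  rw [hIccIoc]
  have hpoint : ∀ n : ℕ,
      ((0:UnitAddCircle) + n • ((α:ℝ):UnitAddCircle)) = (((n * α : ℝ)) : UnitAddCircle) := by
    intro n
    rw [zero_add]
    induction n with
    | zero =>
      rw [zero_smul]
      show (0 : UnitAddCircle) = (((0:ℕ) * α : ℝ) : UnitAddCircle)
      rw [show ((0:ℕ):ℝ) * α = 0 by push_cast; ring]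
      rfl
    | succ k ih =>
      rw [succ_nsmul, ih]
      show (((k * α : ℝ)) : UnitAddCircle) + ((α:ℝ) : UnitAddCircle)
        = (((↑(k+1) * α : ℝ)) : UnitAddCircle)
      rw [show ((↑(k+1) : ℝ) * α) = ((k:ℝ) * α) + α by push_cast; ring]
      rfl
  apply Finset.sum_congr rfl
  intro n _
  congr 1
  rw [hfdef, hpoint n, hGdef]
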